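/- Under the extended Case-C2 setup, the removal of v_2 disconnects s_2 from both destinations; that is, every path from s_2 to d_1 contains v_2 and every path from s_2 to d_2 contains v_2. -/

import Mathlib

open List

/-- `IsPath E p u w` : the nonempty list `p` of vertices is a directed path
from `u` to `w` with respect to the edge relation `E`. -/
def IsPath {V : Type*} (E : V → V → Prop) (p : List V) (u w : V) : Prop :=
  p ≠ [] ∧ p.head? = some u ∧ p.getLast? = some w ∧ p.Chain' E

/-- `Reaches E u w` (written `u ~> w`) : there is a directed path from `u` to `w`. -/
def Reaches {V : Type*} (E : V → V → Prop) (u w : V) : Prop :=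
  ∃ p, IsPath E p u w

/-- A two-unicast layered network: a finite directed graph, with two sources
`s1, s2` and two destinations `d1, d2` (all four distinct), vertices partitioned
into layers `1, ..., r` such that every edge goes from a layer to the next one,
the first layer is `{s1, s2}`, the last layer is `{d1, d2}`, and each source
reaches its corresponding destination. -/
structure TwoUnicastNetwork (V : Type*) [Fintype V] where
  E : V → V → Prop
  s1 : V
  s2 : V
  d1 : V
  d2 : V
  r : ℕ
  layer : V → ℕ
  layer_pos : ∀ v, 1 ≤ layer v
  layer_le : ∀ v, layer v ≤ r
  edge_layer : ∀ u w, E u w → layer w = layer u + 1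
  s_ne : s1 ≠ s2
  d_ne : d1 ≠ d2
  sd_ne : ∀ s d, (s = s1 ∨ s = s2) → (d = d1 ∨ d = d2) → s ≠ d
  first_layer : ∀ v, layer v = 1 ↔ v = s1 ∨ v = s2
  last_layer : ∀ v, layer v = r ↔ v = d1 ∨ v = d2
  conn1 : Reaches E s1 d1
  conn2 : Reaches E s2 d2

/-- `InterferesOn N S Ri srcOther v` : within the induced subgraph `G[S]`, the
node `v` causes interference on the path `Ri` : `v ∈ S`, `v ∉ Ri`, there is an
edge (inside `G[S]`) from `v` into a node of `Ri`, and there is a path from the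
other source `srcOther` to `v` lying inside `G[S]` and disjoint from `Ri`. -/
def InterferesOn {V : Type*} [Fintype V] (N : TwoUnicastNetwork V) (S : Set V)
    (Ri : List V) (srcOther : V) (v : V) : Prop :=
  v ∈ S ∧ v ∉ Ri ∧ (∃ w ∈ Ri, w ∈ S ∧ N.E v w) ∧
    ∃ q, IsPath N.E q srcOther v ∧ (∀ x ∈ q, x ∈ S) ∧ ∀ x ∈ q, x ∉ Ri

/-- `n_i(G[S])` : the number of nodes causing interference on `Ri` within the
induced subgraph `G[S]`, the interfering path coming from `srcOther`. -/
noncomputable def nInterf {V : Type*} [Fintype V] (N : TwoUnicastNetwork V)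
    (S : Set V) (Ri : List V) (srcOther : V) : ℕ :=
  {v | InterferesOn N S Ri srcOther v}.ncard

/-- `n_i^D` : the number of nodes of the other path `Rother` causing (direct)
interference on `Ri` in `G`. -/
noncomputable def nDirect {V : Type*} [Fintype V] (N : TwoUnicastNetwork V)
    (Ri Rother : List V) (srcOther : V) : ℕ :=
  {v | InterferesOn N Set.univ Ri srcOther v ∧ v ∈ Rother}.ncard

/-- The pair `(R1, R2)` (paths `s1 → d1` and `s2 → d2`) has manageable
interference: there is `S ⊇ R1 ∪ R2` with `n_1(G[S]) ≠ 1` and `n_2(G[S]) ≠ 1`. -/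
def Manageable {V : Type*} [Fintype V] (N : TwoUnicastNetwork V)
    (R1 R2 : List V) : Prop :=
  ∃ S : Set V, (∀ x ∈ R1, x ∈ S) ∧ (∀ x ∈ R2, x ∈ S) ∧
    nInterf N S R1 N.s2 ≠ 1 ∧ nInterf N S R2 N.s1 ≠ 1

/-- The pair `(R1, R2)` has `(s1,d1)`-manageable interference. -/
def Manageable1 {V : Type*} [Fintype V] (N : TwoUnicastNetwork V)
    (R1 R2 : List V) : Prop :=
  ∃ S : Set V, (∀ x ∈ R1, x ∈ S) ∧ (∀ x ∈ R2, x ∈ S) ∧ nInterf N S R1 N.s2 ≠ 1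

/-- The pair `(R1, R2)` has `(s2,d2)`-manageable interference. -/
def Manageable2 {V : Type*} [Fintype V] (N : TwoUnicastNetwork V)
    (R1 R2 : List V) : Prop :=
  ∃ S : Set V, (∀ x ∈ R1, x ∈ S) ∧ (∀ x ∈ R2, x ∈ S) ∧ nInterf N S R2 N.s1 ≠ 1

/-- Removal of the vertex `v` disconnects `a` from `b` :
every path from `a` to `b` contains `v`. -/
def CutVert {V : Type*} [Fintype V] (N : TwoUnicastNetwork V) (v a b : V) : Prop :=
  ∀ p, IsPath N.E p a b → v ∈ p


section PathHelpers

variable {V : Type*} {E : V → V → Prop}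

lemma path_prefix {p l1 l2 : List V} {a b x : V}
    (hp : IsPath E p a b) (hsplit : p = l1 ++ x :: l2) : IsPath E (l1 ++ [x]) a x := by
  obtain ⟨hne, hh, hl, hc⟩ := hp
  subst hsplit
  refine ⟨by simp, ?_, by simp, ?_⟩
  · cases l1 with
    | nil => simpa using hh
    | cons y t => simpa using hh
  · have h2 : ((l1 ++ [x]) ++ l2).Chain' E := by simpa using hc
    exact (List.isChain_append.mp h2).1

lemma path_suffix {p l1 l2 : List V} {a b x : V}
    (hp : IsPath E p a b) (hsplit : p = l1 ++ x :: l2) : IsPath E (x :: l2) x b := by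
  obtain ⟨hne, hh, hl, hc⟩ := hp
  subst hsplit
  refine ⟨by simp, by simp, ?_, (List.isChain_append.mp hc).2.1⟩
  rw [← hl, List.getLast?_append_cons]

lemma path_append_edge {p q : List V} {a v w b : V}
    (hp : IsPath E p a v) (he : E v w) (hq : IsPath E q w b) :
    IsPath E (p ++ q) a b := by
  obtain ⟨hne, hh, hl, hc⟩ := hp
  obtain ⟨hne', hh', hl', hc'⟩ := hq
  refine ⟨by simp [hne], ?_, ?_, ?_⟩
  · cases p with
    | nil => exact absurd rfl hne
    | cons y t => simpa using hh
  · cases q with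
    | nil => exact absurd rfl hne'
    | cons y t => rw [List.getLast?_append_cons]; exact hl'
  · refine List.isChain_append.mpr ⟨hc, hc', ?_⟩
    intro x hx y hy
    rw [hl] at hx
    rw [hh'] at hy
    cases hx; cases hy; exact he

lemma path_glue {p q : List V} {a x b : V}
    (hp : IsPath E p a x) (hq : IsPath E q x b) :
    ∃ r, IsPath E r a b ∧ ∀ y ∈ r, y ∈ p ∨ y ∈ q := by
  obtain ⟨hne', hh', hl', hc'⟩ := hq
  cases q with
  | nil => exact absurd rfl hne'
  | cons z t =>
    have hz : z = x := by simpa using hh'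
    subst hz
    cases t with
    | nil =>
      have hbx : z = b := by simpa using hl'
      subst hbx
      exact ⟨p, hp, fun y hy => Or.inl hy⟩
    | cons y t' =>
      have he : E z y := (List.isChain_cons_cons.mp hc').1
      have hq' : IsPath E (y :: t') y b := by
        refine ⟨by simp, by simp, ?_, (List.isChain_cons_cons.mp hc').2⟩
        simpa using hl'
      refine ⟨p ++ (y :: t'), path_append_edge hp he hq', fun u hu => ?_⟩
      rcases List.mem_append.mp hu with h | h
      · exact Or.inl h
      · exact Or.inr (List.mem_cons_of_mem _ h)

/-- If `x` lies on both a path `a → b` and a path `c → d`, there is a path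
`a → d` using only vertices of the two paths. -/
lemma path_cross {p q : List V} {a b c d x : V}
    (hp : IsPath E p a b) (hq : IsPath E q c d) (hxp : x ∈ p) (hxq : x ∈ q) :
    ∃ r, IsPath E r a d ∧ ∀ y ∈ r, y ∈ p ∨ y ∈ q := by
  obtain ⟨l1, l2, h1⟩ := List.append_of_mem hxp
  obtain ⟨m1, m2, h2⟩ := List.append_of_mem hxq
  obtain ⟨r, hr, hmem⟩ := path_glue (path_prefix hp h1) (path_suffix hq h2)
  refine ⟨r, hr, fun y hy => ?_⟩
  rcases hmem y hy with h | h
  · left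
    rw [h1]
    rcases List.mem_append.mp h with h' | h'
    · exact List.mem_append_left _ h'
    · simp only [List.mem_singleton] at h'
      subst h'
      exact List.mem_append_right _ List.mem_cons_self
  · right
    rw [h2]
    exact List.mem_append_right _ h

end PathHelpers

theorem statement13 {V : Type*} [Fintype V]
    (N : TwoUnicastNetwork V)
    (P11 P22 : List V)
    (v1 v2 : V)
    (hP11 : IsPath N.E P11 N.s1 N.d1)
    (hP22 : IsPath N.E P22 N.s2 N.d2)
    (hdisj : P11.Disjoint P22)
    (hNoMan : ∀ R1 R2 : List V, IsPath N.E R1 N.s1 N.d1 → IsPath N.E R2 N.s2 N.d2 →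
      R1.Disjoint R2 → ¬ Manageable N R1 R2)
    (hn1 : nInterf N Set.univ P11 N.s2 = 1)
    (hn1D : nDirect N P11 P22 N.s2 = 1)
    (hv2unique : {v | InterferesOn N Set.univ P11 N.s2 v} = {v2})
    (hv2P22 : v2 ∈ P22)
    (hv1P11 : v1 ∈ P11)
    (hv2v1 : N.E v2 v1)
    (hedgeunique : ∀ u ∈ P22, ∀ w ∈ P11, N.E u w → u = v2 ∧ w = v1)
    (Q11 Z11 : List V)
    (v3 v4 : V)
    (hP21cut : ∀ p : List V, IsPath N.E p N.s2 N.d1 → v2 ∈ p ∧ v1 ∈ p)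
    (hQ11 : IsPath N.E Q11 N.s1 N.d1)
    (hv1Q11 : v1 ∉ Q11)
    (hQ11disj : Q11.Disjoint P22)
    (hQnoDirect : {v | InterferesOn N Set.univ Q11 N.s2 v ∧ v ∈ P22} = ∅)
    (hv3Q11 : v3 ∈ Q11)
    (hv3unique : {v | InterferesOn N Set.univ P22 N.s1 v ∧ v ∈ Q11} = {v3})
    (hv4P22 : v4 ∈ P22)
    (hv3v4 : N.E v3 v4)
    (hv3v4unique : ∀ w ∈ P22, N.E v3 w → w = v4)
    (hP12cut : ∀ p : List V, IsPath N.E p N.s1 N.d2 → v3 ∈ p ∧ v4 ∈ p)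
    (hZ11 : IsPath N.E Z11 N.s1 N.d1)
    (hv3Z11 : v3 ∉ Z11)
    (hv1Z11 : v1 ∈ Z11)
    (hZ11disj : Z11.Disjoint P22)
    (hZnoDirect : {v | InterferesOn N Set.univ P22 N.s1 v ∧ v ∈ Z11} = ∅)
    (hv2Zunique : {v | InterferesOn N Set.univ Z11 N.s2 v ∧ v ∈ P22} = {v2})
    (hv2v1unique : ∀ w ∈ Z11, N.E v2 w → w = v1) :
    (∀ p : List V, IsPath N.E p N.s2 N.d1 → v2 ∈ p) ∧
    (∀ p : List V, IsPath N.E p N.s2 N.d2 → v2 ∈ p) := by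

  constructor
  · exact fun p hp => (hP21cut p hp).1
  intro p hp
  by_contra hv2p
  have hv2Q : v2 ∉ Q11 := fun h => hQ11disj h hv2P22
  have hv2Z : v2 ∉ Z11 := fun h => hZ11disj h hv2P22
  -- p is disjoint from Q11
  have hpQ : p.Disjoint Q11 := by
    intro x hxp hxQ
    obtain ⟨r, hr, hmem⟩ := path_cross hp hQ11 hxp hxQ
    rcases hmem v2 ((hP21cut r hr).1) with h | h
    · exact hv2p h
    · exact hv2Q h
  -- p is disjoint from Z11
  have hpZ : p.Disjoint Z11 := by
    intro x hxp hxZ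
    obtain ⟨r, hr, hmem⟩ := path_cross hp hZ11 hxp hxZ
    rcases hmem v2 ((hP21cut r hr).1) with h | h
    · exact hv2p h
    · exact hv2Z h
  have hv3p : v3 ∉ p := fun h => hpQ h hv3Q11
  -- the union of Z11 and p as a vertex set
  set S : Set V := {x | x ∈ Z11 ∨ x ∈ p} with hS
  -- no interference on Z11 within G[S]
  have hI1 : {v | InterferesOn N S Z11 N.s2 v} = ∅ := by
    rw [Set.eq_empty_iff_forall_notMem]
    rintro v ⟨hvS, hvZ, ⟨w, hwZ, hwS, hew⟩, q, hq, hqS, hqZ⟩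
    obtain ⟨m1, m2, h2⟩ := List.append_of_mem hwZ
    have hr : IsPath N.E (q ++ (w :: m2)) N.s2 N.d1 :=
      path_append_edge hq hew (path_suffix hZ11 h2)
    rcases List.mem_append.mp ((hP21cut _ hr).1) with h | h
    · rcases hqS v2 h with h' | h'
      · exact hqZ v2 h h'
      · exact hv2p h'
    · exact hv2Z (by rw [h2]; exact List.mem_append_right _ h)
  -- no interference on p within G[S]
  have hI2 : {v | InterferesOn N S p N.s1 v} = ∅ := by
    rw [Set.eq_empty_iff_forall_notMem]
    rintro v ⟨hvS, hvp, ⟨w, hwp, hwS, hew⟩, q, hq, hqS, hqp⟩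
    obtain ⟨m1, m2, h2⟩ := List.append_of_mem hwp
    have hr : IsPath N.E (q ++ (w :: m2)) N.s1 N.d2 :=
      path_append_edge hq hew (path_suffix hp h2)
    rcases List.mem_append.mp ((hP12cut _ hr).1) with h | h
    · rcases hqS v3 h with h' | h'
      · exact hv3Z11 h'
      · exact hv3p h'
    · exact hv3p (by rw [h2]; exact List.mem_append_right _ h)
  -- (Z11, p) would have manageable interference: contradiction
  refine hNoMan Z11 p hZ11 hp (fun x hx hx' => hpZ hx' hx) ?_
  refine ⟨S, fun x hx => Or.inl hx, fun x hx => Or.inr hx, ?_, ?_⟩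
  · rw [nInterf, hI1, Set.ncard_empty]; exact zero_ne_one
  · rw [nInterf, hI2, Set.ncard_empty]; exact zero_ne_one
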